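/- arXiv:1703.06061 — 2 statements merged into one kernel-verified Lean document; each statement's English description precedes it below -/
import Mathlib

section
/- Let w ∈ {0,1}^{2k} start with 1, let N_i be the integer with binary representation w[1:k+i], and let s_k = (∏_{i=1}^{k-1} a^{N_i} b) a^{N_k}. Then there exists an SLP for s_k of size O(k); in particular g(s_k) ∈ O(k). -/
/-- A straight-line program over alphabet `α`: nonterminals `0, ..., n-1`, each with a
single nonempty right-hand side referring only to smaller nonterminals (acyclicity). -/
structure SLP (α : Type) where
  n : ℕ
  rhs : Fin n → List (Fin n ⊕ α)
  start : Fin n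
  dec : ∀ i j, Sum.inl j ∈ rhs i → (j : ℕ) < (i : ℕ)
  ne : ∀ i, rhs i ≠ []

/-- The word derived by nonterminal `i`. -/
def SLP.val {α : Type} (G : SLP α) (i : Fin G.n) : List α :=
  ((G.rhs i).attach.map (fun s =>
    match h : s.1 with
    | Sum.inl j => G.val j
    | Sum.inr a => [a])).flatten
termination_by (i : ℕ)
decreasing_by exact G.dec i _ (h ▸ s.2)

/-- The size of an SLP: total length of all right-hand sides. -/
def SLP.size {α : Type} (G : SLP α) : ℕ := ∑ i, (G.rhs i).length

def SLP.produces {α : Type} (G : SLP α) (w : List α) : Prop := G.val G.start = w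

/-- `gsize w` is the size of a smallest SLP producing `w`. -/
noncomputable def gsize {α : Type} (w : List α) : ℕ :=
  sInf {s | ∃ G : SLP α, G.produces w ∧ G.size = s}

/-- The value of a binary word (most significant bit first, `true` = 1). -/
def binVal (l : List Bool) : ℕ := l.foldl (fun acc b => 2 * acc + cond b 1 0) 0

/-- The word `a^{N 1} b a^{N 2} b ... b a^{N k}` over the alphabet `Fin 2`,
with `a = 0` and `b = 1`. -/
def blockWord (N : ℕ → ℕ) (k : ℕ) : List (Fin 2) :=
  ((List.range (k - 1)).flatMap (fun j => List.replicate (N (j + 1)) 0 ++ [1])) ++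
    List.replicate (N k) 0

theorem SLP.val_eq {α : Type} (G : SLP α) (i : Fin G.n) :
    G.val i = ((G.rhs i).map (Sum.elim (fun j => G.val j) (fun a => [a]))).flatten := by
  rw [SLP.val]
  congr 1
  rw [← List.attach_map_val (l := G.rhs i) (f := Sum.elim (fun j => G.val j) (fun a => [a]))]
  apply List.map_congr_left
  intro s _
  rcases s with ⟨s, hs⟩
  cases s <;> rfl

-- auxiliary rhs
def myRhs (k : ℕ) (w : List Bool) : Fin (2*k+1) → List (Fin (2*k+1) ⊕ Fin 2) := fun i =>
  if (i:ℕ) = 0 then [Sum.inr 0]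
  else if h1 : (i:ℕ) < 2*k then
    [Sum.inl ⟨(i:ℕ)-1, by omega⟩, Sum.inl ⟨(i:ℕ)-1, by omega⟩] ++
      (if w.getD i false = true then [Sum.inr 0] else [])
  else
    ((List.finRange (k-1)).flatMap fun j => [Sum.inl ⟨k+(j:ℕ), by have := j.isLt; omega⟩, Sum.inr 1]) ++
      [Sum.inl ⟨2*k-1, by omega⟩]

def myG (k : ℕ) (w : List Bool) (hk : 2 ≤ k) : SLP (Fin 2) where
  n := 2*k+1
  rhs := myRhs k w
  start := ⟨2*k, by omega⟩
  dec := by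
    intro i j hm
    unfold myRhs at hm
    split at hm
    · simp at hm
    · split at hm
      · next h0 h1 =>
        simp only [List.mem_append, List.mem_cons, List.mem_singleton] at hm
        rcases hm with (h | h | h) | h
        · rw [Sum.inl.injEq] at h; subst h; simp; simp at h0; exact Fin.pos_iff_ne_zero.mpr h0
        · rw [Sum.inl.injEq] at h; subst h; simp; simp at h0; exact Fin.pos_iff_ne_zero.mpr h0
        · simp at h
        · split at h <;> simp at h
      · next h0 h1 =>
        have hi : (i:ℕ) = 2*k := by have := i.isLt; omega
        simp only [List.mem_append, List.mem_flatMap, List.mem_cons, List.mem_singleton] at hm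
        rcases hm with ⟨a, _, h | h | h⟩ | (h | h)
        · rw [Sum.inl.injEq] at h; subst h; have := a.isLt; simp; omega
        · simp at h
        · simp at h
        · rw [Sum.inl.injEq] at h; subst h; simp; omega
        · simp at h
  ne := by
    intro i
    unfold myRhs
    split
    · simp
    · split <;> simp

lemma binVal_append (l : List Bool) (b : Bool) :
    binVal (l ++ [b]) = 2 * binVal l + cond b 1 0 := by
  simp [binVal, List.foldl_append]

lemma myG_val (k : ℕ) (w : List Bool) (hk : 2 ≤ k) (hw : w.length = 2*k)
    (hh : w.headI = true) :
    ∀ j, (hj : j < 2*k) → (myG k w hk).val ⟨j, by show j < 2*k+1; omega⟩ =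
      List.replicate (binVal (w.take (j+1))) 0 := by
  intro j
  induction j using Nat.strong_induction_on with
  | _ j IH =>
    intro hj
    rw [SLP.val_eq]
    show (List.map _ (myRhs k w ⟨j, by omega⟩)).flatten = _
    rcases Nat.eq_zero_or_pos j with h0 | h0
    · subst h0
      have hne : w ≠ [] := by intro h; rw [h] at hw; simp at hw; omega
      obtain ⟨a, t, rfl⟩ := List.exists_cons_of_ne_nil hne
      simp only [List.headI] at hh; subst hh
      simp [myRhs, binVal]
      rfl
    · rw [show myRhs k w ⟨j, by omega⟩ =
        [Sum.inl ⟨j-1, by omega⟩, Sum.inl ⟨j-1, by omega⟩] ++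
          (if w.getD j false = true then [Sum.inr 0] else []) from by
        rw [myRhs]
        rw [if_neg (by simpa using h0.ne'), dif_pos (by simpa using hj)]]
      have hIH' : (myG k w hk).val ⟨j-1, by show j-1 < 2*k+1; omega⟩
          = List.replicate (binVal (w.take j)) 0 := by
        have h1 : j - 1 + 1 = j := by omega
        rw [IH (j-1) (by omega) (by omega), h1]
      have hb : w.take (j+1) = w.take j ++ [w.getD j false] := by
        rw [List.take_succ]
        congr 1
        have hjlen : j < w.length := by omega
        simp [List.getD, List.getElem?_eq_getElem hjlen]
      rw [hb, binVal_append]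
      set m := binVal (w.take j) with hm
      cases hc : w.getD j false
      · rw [if_neg (by simp [hc])]
        change (List.map (Sum.elim (fun j : Fin (2*k+1) => (myG k w hk).val j) fun a => [a]) _).flatten = _
        simp only [List.map_append, List.map_cons, List.map_nil, Sum.elim_inl,
          List.flatten_append, List.flatten_cons, List.flatten_nil, List.append_nil]
        erw [hIH']
        simp [← List.replicate_add, two_mul]
      · rw [if_pos (by simp [hc])]
        change (List.map (Sum.elim (fun j : Fin (2*k+1) => (myG k w hk).val j) fun a => [a]) _).flatten = _
        simp only [List.map_append, List.map_cons, List.map_nil, Sum.elim_inl, Sum.elim_inr,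
          List.flatten_append, List.flatten_cons, List.flatten_nil, List.append_nil]
        erw [hIH']
        simp [List.replicate_succ', ← List.replicate_add, two_mul]

lemma flatten_flatMap' {β γ : Type*} (l : List β) (g : β → List (List γ)) :
    (l.flatMap g).flatten = l.flatMap (fun b => (g b).flatten) := by
  induction l <;> simp [*]

lemma myG_produces (k : ℕ) (w : List Bool) (hk : 2 ≤ k) (hw : w.length = 2*k)
    (hh : w.headI = true) :
    (myG k w hk).produces (blockWord (fun i => binVal (w.take (k + i))) k) := by
  show (myG k w hk).val ⟨2*k, by show 2*k < 2*k+1; omega⟩ = _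
  rw [SLP.val_eq]
  show (List.map _ (myRhs k w ⟨2*k, by omega⟩)).flatten = _
  rw [show myRhs k w ⟨2*k, by omega⟩ =
      ((List.finRange (k-1)).flatMap fun j =>
        [Sum.inl ⟨k+(j:ℕ), by have := j.isLt; omega⟩, Sum.inr 1]) ++
      [Sum.inl ⟨2*k-1, by omega⟩] from by
    rw [myRhs, if_neg (by simp; omega), dif_neg (by simp)]]
  change (List.map (Sum.elim (fun j : Fin (2*k+1) => (myG k w hk).val j) fun a => [a]) _).flatten = _
  rw [List.map_append, List.flatten_append, List.map_flatMap, flatten_flatMap']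
  have hlast : (myG k w hk).val ⟨2*k-1, by show 2*k-1 < 2*k+1; omega⟩ =
      List.replicate (binVal (w.take (k + k))) 0 := by
    rw [myG_val k w hk hw hh (2*k-1) (by omega)]
    congr 2
    have : 2*k - 1 + 1 = k + k := by omega
    rw [this]
  rw [blockWord]
  congr 1
  · rw [← (show (List.finRange (k-1)).map Fin.val = List.range (k-1) from
      List.ext_getElem (by simp) (by simp)), List.flatMap_map]
    apply List.flatMap_congr
    intro x _
    simp only [List.map_cons, List.map_nil, Sum.elim_inl, Sum.elim_inr, List.flatten_cons,
      List.flatten_nil, List.append_nil]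
    erw [myG_val k w hk hw hh (k + (x:ℕ)) (by have := x.isLt; omega)]
    rw [show k + (x:ℕ) + 1 = k + ((x:ℕ) + 1) from by omega]

  · simp only [List.map_cons, List.map_nil, Sum.elim_inl, List.flatten_cons, List.flatten_nil,
      List.append_nil]
    exact hlast

lemma myRhs_len_small (k : ℕ) (w : List Bool) (i : Fin (2*k+1)) (hi : (i:ℕ) < 2*k) :
    (myRhs k w i).length ≤ 3 := by
  rw [myRhs]
  split
  · simp
  · split <;> simp

lemma myG_size (k : ℕ) (w : List Bool) (hk : 2 ≤ k) :
    (myG k w hk).size ≤ 8 * k := by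
  show ∑ i : Fin (2*k+1), (myRhs k w i).length ≤ 8 * k
  rw [Fin.sum_univ_castSucc]
  have h1 : ∑ i : Fin (2*k), (myRhs k w i.castSucc).length ≤ 2*k*3 := by
    calc ∑ i : Fin (2*k), (myRhs k w i.castSucc).length
        ≤ ∑ _i : Fin (2*k), 3 := Finset.sum_le_sum (fun i _ =>
          myRhs_len_small k w i.castSucc (by simpa using i.isLt))
      _ = 2*k*3 := by simp [mul_comm]
  have h2 : (myRhs k w (Fin.last (2*k))).length ≤ 2*k := by
    rw [myRhs, if_neg (by simp [Fin.last]; omega), dif_neg (by simp [Fin.last])]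
    rw [List.length_append, List.length_flatMap]
    refine le_trans (Nat.add_le_add (List.sum_le_card_nsmul _ 2 ?_) le_rfl) ?_
    · intro x hx
      simp only [List.mem_map, List.mem_finRange] at hx
      obtain ⟨j, _, rfl⟩ := hx
      simp [Function.comp]
    · simp only [List.length_map, List.length_finRange, smul_eq_mul, List.length_singleton]
      omega
  omega


/-- For `w ∈ {0,1}^{2k}` starting with `1` and `N i` the value of the prefix `w[1:k+i]`,
the word `s_k = a^{N 1} b ⋯ b a^{N k}` admits an SLP of size `O(k)`;
in particular `g(s_k) ∈ O(k)`. -/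
theorem repair_stmt_6 :
    ∃ C : ℕ, 0 < C ∧ ∀ (k : ℕ) (w : List Bool), 2 ≤ k → w.length = 2 * k →
      w.headI = true →
      ∃ G : SLP (Fin 2),
        G.produces (blockWord (fun i => binVal (w.take (k + i))) k) ∧
        G.size ≤ C * k ∧
        gsize (blockWord (fun i => binVal (w.take (k + i))) k) ≤ C * k := by
  refine ⟨8, by norm_num, fun k w hk hw hh => ?_⟩
  refine ⟨myG k w hk, myG_produces k w hk hw hh, myG_size k w hk, ?_⟩
  exact le_trans (Nat.sInf_le ⟨myG k w hk, myG_produces k w hk hw hh, rfl⟩)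
    (myG_size k w hk)
end

section
/- Let m ≥ 4 with binary representation b_t b_{t−1} ⋯ b_1 b_0 (b_t = 1, t = ⌊log₂ m⌋), and let 1 ≤ r ≤ t − 1. After r rounds of RePair on input a^m (with rules X_1 → aa, X_i → X_{i−1}X_{i−1}), the right-hand side of the start rule is X_r^{q} f_{r−1}(b_{r−1}) ⋯ f_1(b_1) f_0(b_0), where q = ⌊m/2^r⌋, f_0(1) = a, f_i(1) = X_i, f_i(0) = ε. -/
/-- Symbols appearing in RePair's grammars: nonterminals (numbered) or terminals. -/
abbrev RSym (α : Type) := ℕ ⊕ α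

/-- A grammar in RePair's working representation: the list of right-hand sides, where the
rule at position `i` is the rule of nonterminal `i` and the start nonterminal is `0`. -/
abbrev Grammar (α : Type) := List (List (RSym α))

def countNOAux {σ : Type} [DecidableEq σ] (γ : List σ) : ℕ → List σ → ℕ
  | 0, _ => 0
  | fuel + 1, w =>
    if w = [] then 0
    else if γ <+: w then 1 + countNOAux γ fuel (w.drop γ.length)
    else countNOAux γ fuel w.tail

/-- The maximal number of pairwise non-overlapping occurrences of `γ` (with `|γ| ≥ 1`)
in `w`, computed by the left-to-right greedy strategy. -/
def countNO {σ : Type} [DecidableEq σ] (γ w : List σ) : ℕ := countNOAux γ w.length w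

def replaceNOAux {σ : Type} [DecidableEq σ] (γ : List σ) (X : σ) : ℕ → List σ → List σ
  | 0, w => w
  | _ + 1, [] => []
  | fuel + 1, s :: tl =>
    if γ <+: (s :: tl) then X :: replaceNOAux γ X fuel ((s :: tl).drop γ.length)
    else s :: replaceNOAux γ X fuel tl

/-- Replace the non-overlapping occurrences of `γ` in `w`, left to right, by `X`. -/
def replaceNO {σ : Type} [DecidableEq σ] (γ : List σ) (X : σ) (w : List σ) : List σ :=
  replaceNOAux γ X w.length w

/-- The number of pairwise non-overlapping occurrences of `γ` in the right-hand sides. -/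
def freq {α : Type} [DecidableEq α] (G : Grammar α) (γ : List (RSym α)) : ℕ :=
  (G.map (countNO γ)).sum

/-- `γ` is a maximal string of `G`: it has length at least two, occurs at least twice
without overlap, and no strictly longer word occurs at least as many times. -/
def IsMaxStr {α : Type} [DecidableEq α] (G : Grammar α) (γ : List (RSym α)) : Prop :=
  2 ≤ γ.length ∧ 2 ≤ freq G γ ∧ ∀ δ, γ.length < δ.length → freq G δ < freq G γ

/-- One round of RePair: pick a most frequent maximal string `γ`, replace its occurrences
left to right by the fresh nonterminal `G.length`, and append the new rule `X → γ`. -/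
def RePairStep {α : Type} [DecidableEq α] (G G' : Grammar α) : Prop :=
  ∃ γ, IsMaxStr G γ ∧ (∀ δ, IsMaxStr G δ → freq G δ ≤ freq G γ) ∧
    G' = (G.map (fun r => replaceNO γ (Sum.inl G.length) r)) ++ [γ]

/-- `RePairSteps r G G'`: `G'` is obtained from `G` by `r` rounds of RePair. -/
inductive RePairSteps {α : Type} [DecidableEq α] : ℕ → Grammar α → Grammar α → Prop
  | refl (G) : RePairSteps 0 G G
  | tail {n : ℕ} {G₁ G₂ G₃ : Grammar α} :
      RePairSteps n G₁ G₂ → RePairStep G₂ G₃ → RePairSteps (n + 1) G₁ G₃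

/-- The initial grammar `S → w`. -/
def RePairInit {α : Type} (w : List α) : Grammar α := [w.map Sum.inr]

/-- `G` is an output of RePair on input `w`: reachable from `S → w` by rounds of RePair,
with no maximal string left. -/
def RePairRun {α : Type} [DecidableEq α] (w : List α) (G : Grammar α) : Prop :=
  (∃ n, RePairSteps n (RePairInit w) G) ∧ ∀ γ, ¬ IsMaxStr G γ

/-- The size of a grammar: total length of all right-hand sides. -/
def gramSize {α : Type} (G : Grammar α) : ℕ := (G.map List.length).sum


section Aux
variable {σ : Type} [DecidableEq σ]

lemma countNOAux_congr (γ : List σ) (hγ : γ ≠ []) :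
    ∀ f1 f2 w, w.length ≤ f1 → w.length ≤ f2 → countNOAux γ f1 w = countNOAux γ f2 w := by
  intro f1
  induction f1 with
  | zero =>
    intro f2 w h1 _
    rw [List.length_eq_zero_iff.mp (Nat.le_zero.mp h1)]
    cases f2 <;> simp [countNOAux]
  | succ n ih =>
    intro f2 w h1 h2
    match w with
    | [] => cases f2 <;> simp [countNOAux]
    | s :: tl =>
      match f2, h2 with
      | m + 1, h2 =>
        simp only [countNOAux, if_neg (List.cons_ne_nil s tl)]
        have hγ1 : 1 ≤ γ.length := by
          cases γ with
          | nil => exact absurd rfl hγ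
          | cons a l => simp
        split
        · have hd : ((s :: tl).drop γ.length).length ≤ (s :: tl).length - 1 := by
            rw [List.length_drop]; omega
          simp only [List.length_cons] at h1 h2 hd
          rw [ih m _ (by omega) (by omega)]
        · simp only [List.length_cons] at h1 h2
          simp only [List.tail_cons]
          rw [ih m tl (by omega) (by omega)]

lemma countNOAux_eq (γ : List σ) (hγ : γ ≠ []) (fuel : ℕ) (w : List σ)
    (h : w.length ≤ fuel) : countNOAux γ fuel w = countNO γ w :=
  countNOAux_congr γ hγ fuel w.length w h le_rfl

@[simp] lemma countNO_nil (γ : List σ) : countNO γ [] = 0 := rfl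

lemma countNO_cons (γ : List σ) (hγ : γ ≠ []) (s : σ) (tl : List σ) :
    countNO γ (s :: tl) =
      if γ <+: (s :: tl) then 1 + countNO γ ((s :: tl).drop γ.length)
      else countNO γ tl := by
  have hγ1 : 1 ≤ γ.length := by
    cases γ with
    | nil => exact absurd rfl hγ
    | cons a l => simp
  show countNOAux γ (s :: tl).length (s :: tl) = _
  rw [List.length_cons]
  simp only [countNOAux, if_neg (List.cons_ne_nil s tl)]
  split
  · rw [countNOAux_eq γ hγ tl.length _ (by rw [List.length_drop]; simp; omega)]
  · simp only [List.tail_cons]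
    rw [countNOAux_eq γ hγ tl.length tl le_rfl]

lemma replaceNOAux_congr (γ : List σ) (hγ : γ ≠ []) (X : σ) :
    ∀ f1 f2 w, w.length ≤ f1 → w.length ≤ f2 → replaceNOAux γ X f1 w = replaceNOAux γ X f2 w := by
  intro f1
  induction f1 with
  | zero =>
    intro f2 w h1 _
    rw [List.length_eq_zero_iff.mp (Nat.le_zero.mp h1)]
    cases f2 <;> simp [replaceNOAux]
  | succ n ih =>
    intro f2 w h1 h2
    match w with
    | [] => cases f2 <;> simp [replaceNOAux]
    | s :: tl =>
      match f2, h2 with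
      | m + 1, h2 =>
        have hγ1 : 1 ≤ γ.length := by
          cases γ with
          | nil => exact absurd rfl hγ
          | cons a l => simp
        simp only [replaceNOAux]
        split
        · have hd : ((s :: tl).drop γ.length).length ≤ (s :: tl).length - 1 := by
            rw [List.length_drop]; omega
          simp only [List.length_cons] at h1 h2 hd
          rw [ih m _ (by omega) (by omega)]
        · simp only [List.length_cons] at h1 h2
          rw [ih m tl (by omega) (by omega)]

lemma replaceNOAux_eq (γ : List σ) (hγ : γ ≠ []) (X : σ) (fuel : ℕ) (w : List σ)
    (h : w.length ≤ fuel) : replaceNOAux γ X fuel w = replaceNO γ X w :=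
  replaceNOAux_congr γ hγ X fuel w.length w h le_rfl

@[simp] lemma replaceNO_nil (γ : List σ) (X : σ) : replaceNO γ X [] = [] := rfl

lemma replaceNO_cons (γ : List σ) (hγ : γ ≠ []) (X : σ) (s : σ) (tl : List σ) :
    replaceNO γ X (s :: tl) =
      if γ <+: (s :: tl) then X :: replaceNO γ X ((s :: tl).drop γ.length)
      else s :: replaceNO γ X tl := by
  have hγ1 : 1 ≤ γ.length := by
    cases γ with
    | nil => exact absurd rfl hγ
    | cons a l => simp
  show replaceNOAux γ X (s :: tl).length (s :: tl) = _
  rw [List.length_cons]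
  simp only [replaceNOAux]
  split
  · rw [replaceNOAux_eq γ hγ X tl.length _ (by rw [List.length_drop]; simp; omega)]
  · rw [replaceNOAux_eq γ hγ X tl.length tl le_rfl]

end Aux
section Compute
variable {σ : Type} [DecidableEq σ]

lemma ne_nil_of_two_le {γ : List σ} (h : 2 ≤ γ.length) : γ ≠ [] := by
  intro he; rw [he] at h; simp at h

lemma countNO_eq_zero_of_not_mem {γ : List σ} {s : σ} (hs : s ∈ γ) :
    ∀ {w : List σ}, s ∉ w → countNO γ w = 0 := by
  have hγ : γ ≠ [] := List.ne_nil_of_mem hs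
  intro w
  induction w with
  | nil => intro; rfl
  | cons a tl ih =>
    intro hw
    rw [countNO_cons γ hγ]
    rw [if_neg]
    · exact ih (fun h => hw (List.mem_cons_of_mem a h))
    · intro hp
      exact hw (hp.sublist.subset hs)

lemma countNO_eq_zero_of_length_lt {γ : List σ} (hγ : γ ≠ []) :
    ∀ {w : List σ}, w.length < γ.length → countNO γ w = 0 := by
  intro w
  induction w with
  | nil => intro; rfl
  | cons a tl ih =>
    intro hw
    rw [countNO_cons γ hγ, if_neg]
    · exact ih (by simp at hw ⊢; omega)
    · intro hp
      have := hp.length_le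
      omega

lemma countNO_pair {γ : List σ} (hγ : 2 ≤ γ.length) (a b : σ) :
    countNO γ [a, b] = if γ = [a, b] then 1 else 0 := by
  have hne : γ ≠ [] := ne_nil_of_two_le hγ
  rw [countNO_cons γ hne]
  by_cases h : γ <+: [a, b]
  · have hlen : γ.length = 2 := le_antisymm (by simpa using h.length_le) hγ
    have heq : γ = [a, b] := List.IsPrefix.eq_of_length h (by simp [hlen])
    rw [if_pos h, if_pos heq, heq]
    simp [countNO_nil]
  · rw [if_neg h, if_neg]
    · rw [countNO_cons γ hne, if_neg]
      · simp [countNO_eq_zero_of_length_lt hne (show [b].length < γ.length by simp; omega)]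
      · intro hp
        have := hp.length_le
        simp at this; omega
    · intro he; rw [he] at h; exact h List.prefix_rfl

lemma countNO_mul_count_le (γ : List σ) (hγ : γ ≠ []) (s : σ) :
    ∀ n (w : List σ), w.length ≤ n → countNO γ w * γ.count s ≤ w.count s := by
  have hγ1 : 1 ≤ γ.length := by
    cases γ with
    | nil => exact absurd rfl hγ
    | cons a l => simp
  intro n
  induction n with
  | zero =>
    intro w h
    rw [List.length_eq_zero_iff.mp (Nat.le_zero.mp h)]
    simp
  | succ n ih =>
    intro w h
    match w with
    | [] => simp
    | a :: tl =>
      rw [countNO_cons γ hγ]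
      by_cases hp : γ <+: (a :: tl)
      · obtain ⟨rest, hrest⟩ := hp
        rw [if_pos ⟨rest, hrest⟩, ← hrest, List.drop_left]
        have hlen : rest.length ≤ n := by
          have := congrArg List.length hrest
          simp at this h ⊢
          omega
        calc (1 + countNO γ rest) * γ.count s
            = γ.count s + countNO γ rest * γ.count s := by ring
          _ ≤ γ.count s + rest.count s := by
              have := ih rest hlen
              omega
          _ = (γ ++ rest).count s := (List.count_append ..).symm
      · rw [if_neg hp]
        have h1 : countNO γ tl * γ.count s ≤ tl.count s := by
          apply ih; simp at h; omega
        have : tl.count s ≤ (a :: tl).count s := by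
          rw [List.count_cons]; omega
        omega

lemma countNO_le_of_mem {γ : List σ} {s : σ} (hs : s ∈ γ) (w : List σ) :
    countNO γ w ≤ w.count s := by
  have h1 : 1 ≤ γ.count s := List.count_pos_iff.mpr hs
  have := countNO_mul_count_le γ (List.ne_nil_of_mem hs) s w.length w le_rfl
  calc countNO γ w = countNO γ w * 1 := (mul_one _).symm
    _ ≤ countNO γ w * γ.count s := Nat.mul_le_mul_left _ h1
    _ ≤ w.count s := this

lemma replicate_prefix_iff {x : σ} {L q : ℕ} {t : List σ} (ht : x ∉ t) (hL : 1 ≤ L) :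
    List.replicate L x <+: List.replicate q x ++ t ↔ L ≤ q := by
  constructor
  · intro h
    have := h.sublist.count_le x
    simpa [List.count_replicate, List.count_eq_zero_of_not_mem ht] using this
  · intro h
    refine ⟨List.replicate (q - L) x ++ t, ?_⟩
    rw [← List.append_assoc, ← List.replicate_add]
    congr 2
    omega

lemma countNO_replicate_append (x : σ) (L : ℕ) (hL : 1 ≤ L) (t : List σ) (ht : x ∉ t) :
    ∀ n q, q ≤ n → countNO (List.replicate L x) (List.replicate q x ++ t) = q / L := by
  have hγ : List.replicate L x ≠ [] := by simp; omega
  have hx : x ∈ List.replicate L x := by simp; omega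
  intro n
  induction n with
  | zero =>
    intro q h
    interval_cases q
    simp [countNO_eq_zero_of_not_mem hx ht]
  | succ n ih =>
    intro q h
    rcases Nat.eq_zero_or_pos q with hq | hq
    · subst hq
      simp [countNO_eq_zero_of_not_mem hx ht]
    by_cases hLq : L ≤ q
    · have hpre : List.replicate L x <+: List.replicate q x ++ t :=
        (replicate_prefix_iff ht hL).mpr hLq
      obtain ⟨p, hp⟩ : ∃ p, q = p + 1 := ⟨q - 1, by omega⟩
      subst hp
      rw [List.replicate_succ, List.cons_append, countNO_cons _ hγ, if_pos (by
        rw [← List.cons_append, ← List.replicate_succ]; exact hpre)]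
      rw [← List.cons_append, ← List.replicate_succ]
      have hdrop : (List.replicate (p + 1) x ++ t).drop (List.replicate L x).length
          = List.replicate (p + 1 - L) x ++ t := by
        conv_lhs => rw [show (p + 1) = L + (p + 1 - L) by omega, List.replicate_add,
          List.append_assoc]
        exact List.drop_left
      rw [hdrop, ih (p + 1 - L) (by omega)]
      rw [Nat.div_eq_sub_div (by omega) hLq]
      omega
    · obtain ⟨p, hp⟩ : ∃ p, q = p + 1 := ⟨q - 1, by omega⟩
      subst hp
      rw [List.replicate_succ, List.cons_append, countNO_cons _ hγ, if_neg (by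
        rw [← List.cons_append, ← List.replicate_succ]
        intro hc
        exact hLq ((replicate_prefix_iff ht hL).mp hc))]
      rw [ih p (by omega)]
      rw [Nat.div_eq_of_lt (by omega), Nat.div_eq_of_lt (by omega)]

lemma replaceNO_of_not_mem {γ : List σ} {s : σ} (hs : s ∈ γ) (X : σ) :
    ∀ {w : List σ}, s ∉ w → replaceNO γ X w = w := by
  have hγ : γ ≠ [] := List.ne_nil_of_mem hs
  intro w
  induction w with
  | nil => intro; rfl
  | cons a tl ih =>
    intro hw
    rw [replaceNO_cons γ hγ, if_neg]
    · rw [ih (fun h => hw (List.mem_cons_of_mem a h))]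
    · intro hp
      exact hw (hp.sublist.subset hs)

lemma replaceNO_pair {γ : List σ} (hγ : 2 ≤ γ.length) (X a b : σ) :
    replaceNO γ X [a, b] = if γ = [a, b] then [X] else [a, b] := by
  have hne : γ ≠ [] := ne_nil_of_two_le hγ
  rw [replaceNO_cons γ hne]
  by_cases h : γ <+: [a, b]
  · have hlen : γ.length = 2 := le_antisymm (by simpa using h.length_le) hγ
    have heq : γ = [a, b] := List.IsPrefix.eq_of_length h (by simp [hlen])
    rw [if_pos h, if_pos heq, heq]
    simp
  · rw [if_neg h, if_neg]
    · rw [replaceNO_cons γ hne, if_neg]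
      · simp
      · intro hp
        have := hp.length_le
        simp at this; omega
    · intro he; rw [he] at h; exact h List.prefix_rfl

lemma replaceNO_pair_replicate (x X : σ) (t : List σ) (ht : x ∉ t) :
    ∀ n q, q ≤ n → replaceNO [x, x] X (List.replicate q x ++ t) =
      List.replicate (q / 2) X ++ List.replicate (q % 2) x ++ t := by
  have hγ : ([x, x] : List σ) ≠ [] := by simp
  have hx : x ∈ ([x, x] : List σ) := by simp
  intro n
  induction n with
  | zero =>
    intro q h
    interval_cases q
    simp [replaceNO_of_not_mem hx X ht]
  | succ n ih =>
    intro q h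
    match q with
    | 0 => simp [replaceNO_of_not_mem hx X ht]
    | 1 =>
      rw [show List.replicate 1 x ++ t = x :: t by simp]
      rw [replaceNO_cons _ hγ, if_neg (by
        intro hc
        rcases hc with ⟨rest, hrest⟩
        simp only [List.cons_append, List.cons.injEq] at hrest
        exact ht (hrest.2 ▸ (List.mem_cons_self : x ∈ x :: rest)))]
      rw [replaceNO_of_not_mem hx X ht]
      simp
    | p + 2 =>
      have hpre : [x, x] <+: x :: x :: (List.replicate p x ++ t) :=
        ⟨List.replicate p x ++ t, rfl⟩
      rw [show List.replicate (p + 2) x ++ t = x :: x :: (List.replicate p x ++ t) by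
        simp [List.replicate_succ]]
      rw [replaceNO_cons _ hγ, if_pos hpre]
      simp only [List.length_cons, List.drop_succ_cons, List.length_nil, List.drop_zero]
      rw [ih p (by omega)]
      rw [show (p + 2) / 2 = p / 2 + 1 by omega, show (p + 2) % 2 = p % 2 by omega]
      simp [List.replicate_succ]

end Compute
attribute [local instance 2000] instBEqOfDecidableEq

def Ysym (i : ℕ) : ℕ ⊕ Unit := if i = 0 then Sum.inr () else Sum.inl i

lemma Ysym_injective : Function.Injective Ysym := by
  intro a b hab
  unfold Ysym at hab
  split at hab <;> split at hab <;> simp_all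

def sfx (m k : ℕ) : List (ℕ ⊕ Unit) :=
  (List.range k).reverse.flatMap (fun i => if Nat.testBit m i then [Ysym i] else [])

def Gk (m k : ℕ) : List (List (ℕ ⊕ Unit)) :=
  (List.replicate (m / 2 ^ k) (Ysym k) ++ sfx m k) ::
    (List.range k).map (fun i => [Ysym i, Ysym i])

lemma mem_sfx {m k : ℕ} {s : ℕ ⊕ Unit} (hs : s ∈ sfx m k) : ∃ i < k, s = Ysym i := by
  unfold sfx at hs
  simp only [List.mem_flatMap, List.mem_reverse, List.mem_range] at hs
  obtain ⟨i, hi, hmem⟩ := hs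
  refine ⟨i, hi, ?_⟩
  split at hmem <;> simp_all

lemma Ysym_not_mem_sfx {m k : ℕ} : Ysym k ∉ sfx m k := by
  intro h
  obtain ⟨i, hi, heq⟩ := mem_sfx h
  exact absurd (Ysym_injective heq) (by omega)

lemma sfx_sublist (m k : ℕ) : List.Sublist (sfx m k) ((List.range k).reverse.map Ysym) := by
  unfold sfx
  induction (List.range k).reverse with
  | nil => simp
  | cons a l ih =>
    rw [List.flatMap_cons, List.map_cons]
    by_cases h : Nat.testBit m a
    · rw [if_pos h]
      exact List.Sublist.cons₂ _ ih
    · rw [if_neg h]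
      exact List.Sublist.cons _ ih

lemma count_sfx_le_one (m k : ℕ) (s : ℕ ⊕ Unit) : (sfx m k).count s ≤ 1 := by
  have hnd : ((List.range k).reverse.map Ysym).Nodup :=
    (List.nodup_reverse.mpr (List.nodup_range : (List.range k).Nodup)).map Ysym_injective
  have := (sfx_sublist m k).count_le s
  exact le_trans this (List.nodup_iff_count_le_one.mp hnd s)

lemma count_start_le_one {m k q : ℕ} {s : ℕ ⊕ Unit} (hs : s ≠ Ysym k) :
    (List.replicate q (Ysym k) ++ sfx m k).count s ≤ 1 := by
  rw [List.count_append, List.count_replicate,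
    if_neg (by simp only [beq_iff_eq]; exact fun h => hs h.symm)]
  simpa using count_sfx_le_one m k s

lemma freq_Gk (m k : ℕ) (γ : List (ℕ ⊕ Unit)) :
    freq (Gk m k) γ = countNO γ (List.replicate (m / 2 ^ k) (Ysym k) ++ sfx m k) +
      ((List.range k).map (fun i => countNO γ [Ysym i, Ysym i])).sum := by
  simp [freq, Gk, List.map_map, Function.comp_def]

lemma sum_rules_eq_zero {γ : List (ℕ ⊕ Unit)} {l : List ℕ}
    (h : ∀ i ∈ l, γ ≠ [Ysym i, Ysym i]) (hγ : 2 ≤ γ.length) :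
    (l.map (fun i => countNO γ [Ysym i, Ysym i])).sum = 0 := by
  apply List.sum_eq_zero
  intro x hx
  simp only [List.mem_map] at hx
  obtain ⟨i, hi, rfl⟩ := hx
  rw [countNO_pair hγ, if_neg (h i hi)]

lemma sum_rules_le_one {γ : List (ℕ ⊕ Unit)} {l : List ℕ} (hl : l.Nodup)
    (hγ : 2 ≤ γ.length) :
    (l.map (fun i => countNO γ [Ysym i, Ysym i])).sum ≤ 1 := by
  induction l with
  | nil => simp
  | cons a l ih =>
    rw [List.map_cons, List.sum_cons]
    have hnd := (List.nodup_cons.mp hl)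
    rw [countNO_pair hγ]
    by_cases h : γ = [Ysym a, Ysym a]
    · rw [if_pos h]
      have hz : (l.map (fun i => countNO γ [Ysym i, Ysym i])).sum = 0 := by
        apply List.sum_eq_zero
        intro x hx
        simp only [List.mem_map] at hx
        obtain ⟨i, hi, rfl⟩ := hx
        rw [countNO_pair hγ, if_neg]
        intro he
        rw [h] at he
        have he' : [Ysym a, Ysym a] = [Ysym i, Ysym i] := h ▸ he
        simp only [List.cons.injEq, and_true] at he'
        exact hnd.1 (Ysym_injective he'.1 ▸ hi)
      omega
    · rw [if_neg h]
      simpa using ih hnd.2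

lemma freq_pair (m k : ℕ) : freq (Gk m k) [Ysym k, Ysym k] = m / 2 ^ k / 2 := by
  rw [freq_Gk]
  have h1 : countNO [Ysym k, Ysym k] (List.replicate (m / 2 ^ k) (Ysym k) ++ sfx m k)
      = m / 2 ^ k / 2 := by
    have := countNO_replicate_append (Ysym k) 2 (by omega) (sfx m k) Ysym_not_mem_sfx
      (m / 2 ^ k) (m / 2 ^ k) le_rfl
    simpa using this
  rw [h1, sum_rules_eq_zero (fun i hi he => ?_) (by simp)]
  · simp
  · simp only [List.mem_range] at hi
    simp only [List.cons.injEq, and_true] at he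
    have : k = i := Ysym_injective he.1
    omega

lemma freq_other {m k : ℕ} {γ : List (ℕ ⊕ Unit)} (hγ : 2 ≤ γ.length)
    (hne : γ ≠ [Ysym k, Ysym k]) (hq : 3 ≤ m / 2 ^ k) :
    freq (Gk m k) γ ≤ m / 2 ^ k / 3 := by
  set q := m / 2 ^ k with hqdef
  rw [freq_Gk, ← hqdef]
  rcases Classical.em (∀ s ∈ γ, s = Ysym k) with hall | hall
  · have hrep : γ = List.replicate γ.length (Ysym k) :=
      List.eq_replicate_iff.mpr ⟨rfl, hall⟩
    have hL3 : 3 ≤ γ.length := by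
      rcases Nat.lt_or_ge γ.length 3 with h | h
      · exfalso
        have : γ.length = 2 := by omega
        rw [this] at hrep
        exact hne (by simpa using hrep)
      · exact h
    have hstart : countNO γ (List.replicate q (Ysym k) ++ sfx m k) = q / γ.length := by
      conv_lhs => rw [hrep]
      exact countNO_replicate_append (Ysym k) γ.length (by omega) _ Ysym_not_mem_sfx q q le_rfl
    rw [hstart]
    have hrules : ((List.range k).map (fun i => countNO γ [Ysym i, Ysym i])).sum = 0 := by
      apply List.sum_eq_zero
      intro x hx
      simp only [List.mem_map] at hx
      obtain ⟨i, hi, rfl⟩ := hx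
      exact countNO_eq_zero_of_length_lt (ne_nil_of_two_le hγ) (by simp; omega)
    rw [hrules]
    have : q / γ.length ≤ q / 3 := Nat.div_le_div_left hL3 (by omega)
    omega
  · push_neg at hall
    obtain ⟨s, hsmem, hsne⟩ := hall
    have hstart1 : countNO γ (List.replicate q (Ysym k) ++ sfx m k) ≤ 1 :=
      le_trans (countNO_le_of_mem hsmem _) (count_start_le_one hsne)
    have hq3 : 1 ≤ q / 3 := by omega
    by_cases hrule : ∃ i < k, γ = [Ysym i, Ysym i]
    · obtain ⟨i, hik, rfl⟩ := hrule
      have hik' : Ysym i ≠ Ysym k := fun h => absurd (Ysym_injective h) (by omega)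
      have hstart0 : countNO [Ysym i, Ysym i] (List.replicate q (Ysym k) ++ sfx m k) = 0 := by
        have h1 := countNO_mul_count_le [Ysym i, Ysym i] (by simp) (Ysym i)
          (List.replicate q (Ysym k) ++ sfx m k).length
          (List.replicate q (Ysym k) ++ sfx m k) le_rfl
        have h2 : ([Ysym i, Ysym i] : List (ℕ ⊕ Unit)).count (Ysym i) = 2 := by simp
        have h3 : (List.replicate q (Ysym k) ++ sfx m k).count (Ysym i) ≤ 1 :=
          count_start_le_one hik'
        rw [h2] at h1
        omega
      rw [hstart0]
      have := sum_rules_le_one (List.nodup_range : (List.range k).Nodup) (show 2 ≤ ([Ysym i, Ysym i] : List _).length by simp)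
      omega
    · push_neg at hrule
      have hrules : ((List.range k).map (fun i => countNO γ [Ysym i, Ysym i])).sum = 0 :=
        sum_rules_eq_zero (fun i hi => hrule i (by simpa using hi)) hγ
      omega



lemma maxstr_pair {m k : ℕ} (hq : 4 ≤ m / 2 ^ k) : IsMaxStr (Gk m k) [Ysym k, Ysym k] := by
  refine ⟨by simp, ?_, ?_⟩
  · rw [freq_pair]; omega
  · intro δ hlen
    simp only [List.length_cons, List.length_nil] at hlen
    have h2 : 2 ≤ δ.length := by omega
    have hne : δ ≠ [Ysym k, Ysym k] := by intro h; rw [h] at hlen; simp at hlen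
    have := freq_other (m := m) (k := k) h2 hne (by omega)
    rw [freq_pair]
    omega

lemma freq_le_pair {m k : ℕ} (hq : 4 ≤ m / 2 ^ k) {δ : List (ℕ ⊕ Unit)}
    (hδ : IsMaxStr (Gk m k) δ) :
    freq (Gk m k) δ ≤ freq (Gk m k) [Ysym k, Ysym k] := by
  rcases Classical.em (δ = [Ysym k, Ysym k]) with h | h
  · rw [h]
  · have := freq_other (m := m) (k := k) hδ.1 h (by omega)
    rw [freq_pair]; omega

lemma chosen_eq_pair {m k : ℕ} (hq : 4 ≤ m / 2 ^ k) {γ : List (ℕ ⊕ Unit)}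
    (hγ : IsMaxStr (Gk m k) γ)
    (hmax : freq (Gk m k) [Ysym k, Ysym k] ≤ freq (Gk m k) γ) :
    γ = [Ysym k, Ysym k] := by
  by_contra h
  have := freq_other (m := m) (k := k) hγ.1 h (by omega)
  rw [freq_pair] at hmax
  omega

lemma Gk_length (m k : ℕ) : (Gk m k).length = k + 1 := by simp [Gk]

lemma sfx_succ (m k : ℕ) :
    sfx m (k + 1) = (if Nat.testBit m k then [Ysym k] else []) ++ sfx m k := by
  unfold sfx
  rw [List.range_succ, List.reverse_append, List.flatMap_append]
  simp

lemma replicate_mod_two (m k : ℕ) :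
    List.replicate (m / 2 ^ k % 2) (Ysym k) = if Nat.testBit m k then [Ysym k] else [] := by
  rw [Nat.testBit_eq_decide_div_mod_eq]
  rcases Nat.mod_two_eq_zero_or_one (m / 2 ^ k) with h | h <;> simp [h]

lemma replace_Gk {m k : ℕ} :
    (Gk m k).map (fun r => replaceNO [Ysym k, Ysym k] (Sum.inl (Gk m k).length) r)
      ++ [[Ysym k, Ysym k]] = Gk m (k + 1) := by
  rw [Gk_length]
  conv_lhs => rw [Gk]
  rw [List.map_cons, List.cons_append]
  have hY : (Sum.inl (k + 1) : ℕ ⊕ Unit) = Ysym (k + 1) := by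
    unfold Ysym; rw [if_neg (by omega)]
  rw [Gk]
  congr 1
  · rw [hY, replaceNO_pair_replicate (Ysym k) (Ysym (k+1)) (sfx m k) Ysym_not_mem_sfx
      (m / 2 ^ k) (m / 2 ^ k) le_rfl]
    rw [sfx_succ, ← replicate_mod_two, List.append_assoc]
    congr 2
    rw [Nat.div_div_eq_div_mul, pow_succ]
  · rw [List.map_map, List.range_succ, List.map_append]
    congr 1
    apply List.map_congr_left
    intro i hi
    simp only [List.mem_range] at hi
    simp only [Function.comp_apply]
    rw [replaceNO_pair (by simp), if_neg]
    intro he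
    simp only [List.cons.injEq, and_true] at he
    exact absurd (Ysym_injective he.1) (by omega)

lemma step_to (m k : ℕ) (hq : 4 ≤ m / 2 ^ k) : RePairStep (Gk m k) (Gk m (k + 1)) :=
  ⟨[Ysym k, Ysym k], maxstr_pair hq, fun _ hδ => freq_le_pair hq hδ,
    (replace_Gk (m := m) (k := k)).symm⟩

lemma step_uniq (m k : ℕ) (hq : 4 ≤ m / 2 ^ k) {G' : Grammar Unit}
    (h : RePairStep (Gk m k) G') : G' = Gk m (k + 1) := by
  obtain ⟨γ, hγ, hmax, rfl⟩ := h
  have hc := chosen_eq_pair hq hγ (hmax _ (maxstr_pair hq))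
  rw [hc, replace_Gk]

lemma Gk_zero (m : ℕ) : Gk m 0 = RePairInit (List.replicate m ()) := by
  simp [Gk, sfx, RePairInit, Ysym]

lemma steps_Gk (m : ℕ) (hm : 4 ≤ m) :
    ∀ k, k ≤ Nat.log 2 m - 1 →
      RePairSteps k (RePairInit (List.replicate m ())) (Gk m k) ∧
       ∀ G, RePairSteps k (RePairInit (List.replicate m ())) G → G = Gk m k := by
  have hm0 : m ≠ 0 := by omega
  have hlog : 2 ≤ Nat.log 2 m := by
    rw [Nat.le_log_iff_pow_le (by norm_num) hm0]; simpa using hm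
  have hpow : 2 ^ Nat.log 2 m ≤ m := Nat.pow_log_le_self 2 hm0
  intro k
  induction k with
  | zero =>
    intro _
    refine ⟨?_, ?_⟩
    · rw [Gk_zero]; exact RePairSteps.refl _
    · intro G hG
      cases hG
      rw [Gk_zero]
  | succ n ih =>
    intro hk
    have hn := ih (by omega)
    have hq : 4 ≤ m / 2 ^ n := by
      rw [Nat.le_div_iff_mul_le (Nat.pow_pos (by norm_num))]
      calc 4 * 2 ^ n = 2 ^ (n + 2) := by ring
        _ ≤ 2 ^ Nat.log 2 m := Nat.pow_le_pow_right (by norm_num) (by omega)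
        _ ≤ m := hpow
    refine ⟨RePairSteps.tail hn.1 (step_to m n hq), ?_⟩
    intro G hG
    cases hG with
    | tail h1 h2 =>
      rw [hn.2 _ h1] at h2
      exact step_uniq m n hq h2

/-- After `r` rounds (`1 ≤ r ≤ ⌊log₂ m⌋ - 1`) of RePair on the unary input `a^m`
(`m ≥ 4`), the right-hand side of the start rule is
`(X r)^q · f (r-1) (b (r-1)) ⋯ f 1 (b 1) f 0 (b 0)` with `q = ⌊m / 2^r⌋`, where `b j` is
the `j`-th binary digit of `m`, `f 0 1 = a`, `f i 1 = X i` and `f i 0 = ε`. -/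
theorem repair_stmt_13 (m r : ℕ) (hm : 4 ≤ m) (hr1 : 1 ≤ r)
    (hr2 : r ≤ Nat.log 2 m - 1) :
    (∃ G : Grammar Unit, RePairSteps r (RePairInit (List.replicate m ())) G) ∧
    ∀ G : Grammar Unit, RePairSteps r (RePairInit (List.replicate m ())) G →
      G.headI = List.replicate (m / 2 ^ r) (Sum.inl r : RSym Unit) ++
        (List.range r).reverse.flatMap (fun i =>
          if Nat.testBit m i then
            [if i = 0 then (Sum.inr () : RSym Unit) else Sum.inl i]
          else []) := by
  have h := steps_Gk m hm r hr2
  refine ⟨⟨Gk m r, h.1⟩, fun G hG => ?_⟩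
  rw [h.2 G hG]
  show List.replicate (m / 2 ^ r) (Ysym r) ++ sfx m r = _
  have hY : Ysym r = Sum.inl r := by unfold Ysym; rw [if_neg (by omega)]
  rw [hY]
  rfl
end
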